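/- The disjoint union of optimal pots need not be optimal: the graph G = K_5 ⊔ S_4 ⊔ P_2 (complete graph on 5 vertices, star with 4 leaves, path on 2 vertices) is realized in Scenario 1 by the 3-tile pot {a²â², a, â}, i.e., there is an orientation of G in which every vertex has (out,in)-degree pair equal to (2,2), (1,0), or (0,1). -/
import Mathlib


/-- Vertices of `K₅ ⊔ S₄ ⊔ P₂`: five `K₅` vertices, five star vertices (the center
is `0`, the other four are leaves), and two path vertices. -/
abbrev V19 : Type := Fin 5 ⊕ (Fin 5 ⊕ Fin 2)

/-- Generating relation for the disjoint union `K₅ ⊔ S₄ ⊔ P₂`. -/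
def rel19 : V19 → V19 → Prop := fun u v =>
  match u, v with
  | Sum.inl _, Sum.inl _ => True
  | Sum.inr (Sum.inl i), Sum.inr (Sum.inl _) => i = 0
  | Sum.inr (Sum.inr _), Sum.inr (Sum.inr _) => True
  | _, _ => False

/-- The graph `G = K₅ ⊔ S₄ ⊔ P₂`. -/
def G19 : SimpleGraph V19 := SimpleGraph.fromRel rel19

/-- Out-degree of a vertex in a directed graph. -/
noncomputable def odeg (dir : V19 → V19 → Prop) (v : V19) : ℕ := {u | dir v u}.ncard

/-- In-degree of a vertex in a directed graph. -/
noncomputable def ideg (dir : V19 → V19 → Prop) (v : V19) : ℕ := {u | dir u v}.ncard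


def dirB : V19 → V19 → Bool := fun u v =>
  match u, v with
  | Sum.inl i, Sum.inl j => j = i + 1 ∨ j = i + 2
  | Sum.inr (Sum.inl i), Sum.inr (Sum.inl j) =>
      (i = 0 ∧ (j = 1 ∨ j = 2)) ∨ (j = 0 ∧ (i = 3 ∨ i = 4))
  | Sum.inr (Sum.inr i), Sum.inr (Sum.inr j) => i = 0 ∧ j = 1
  | _, _ => false

instance : DecidableRel rel19 := fun u v => by
  rcases u with i | (i | i) <;> rcases v with j | (j | j) <;>
    simp only [rel19] <;> infer_instance

instance : DecidableRel G19.Adj := fun u v => by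
  rw [G19, SimpleGraph.fromRel_adj]; infer_instance

lemma odeg_eq (v : V19) :
    odeg (fun u w => dirB u w = true) v = (Finset.univ.filter (fun u => dirB v u)).card := by
  rw [odeg, ← Set.ncard_coe_finset]; congr 1; ext u; simp

lemma ideg_eq (v : V19) :
    ideg (fun u w => dirB u w = true) v = (Finset.univ.filter (fun u => dirB u v)).card := by
  rw [ideg, ← Set.ncard_coe_finset]; congr 1; ext u; simp

/-- The graph `G = K₅ ⊔ S₄ ⊔ P₂` is realized in Scenario 1 by the
3-tile pot `{a²â², a, â}`: there is an orientation of `G` in which every vertex has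
(out-degree, in-degree) pair `(2,2)`, `(1,0)` or `(0,1)`.  Precisely, every `K₅`
vertex and the star center get `(2,2)`, each star leaf gets `(1,0)` or `(0,1)`, and
the two `P₂` endpoints get `(1,0)` and `(0,1)` in some order. -/
theorem stmt19 :
    ∃ dir : V19 → V19 → Prop,
      (∀ u v, dir u v → G19.Adj u v) ∧
      (∀ u v, G19.Adj u v → (dir u v ↔ ¬ dir v u)) ∧
      (∀ v : V19, (odeg dir v, ideg dir v) ∈ ({(2,2),(1,0),(0,1)} : Set (ℕ × ℕ))) ∧
      (∀ i : Fin 5, (odeg dir (Sum.inl i), ideg dir (Sum.inl i)) = (2,2)) ∧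
      (odeg dir (Sum.inr (Sum.inl 0)), ideg dir (Sum.inr (Sum.inl 0))) = (2,2) ∧
      (∀ i : Fin 5, i ≠ 0 →
        (odeg dir (Sum.inr (Sum.inl i)), ideg dir (Sum.inr (Sum.inl i)))
          ∈ ({(1,0),(0,1)} : Set (ℕ × ℕ))) ∧
      (((odeg dir (Sum.inr (Sum.inr 0)), ideg dir (Sum.inr (Sum.inr 0))) = (1,0) ∧
          (odeg dir (Sum.inr (Sum.inr 1)), ideg dir (Sum.inr (Sum.inr 1))) = (0,1)) ∨
        ((odeg dir (Sum.inr (Sum.inr 0)), ideg dir (Sum.inr (Sum.inr 0))) = (0,1) ∧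
          (odeg dir (Sum.inr (Sum.inr 1)), ideg dir (Sum.inr (Sum.inr 1))) = (1,0))) := by
  refine ⟨fun u w => dirB u w = true, ?_, ?_, ?_, ?_, ?_, ?_, ?_⟩ <;>
    simp only [odeg_eq, ideg_eq, Set.mem_insert_iff, Set.mem_singleton_iff] <;> decide
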